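/- Let V be a finite type with Fintype.card V ≥ 2 and E : Fin m → Sym2 V a multigraph on V that is decodable and connected (every two vertices are connected in G−∅). If κ_G ≤ L_G, then κ_G ≤ m(G), where κ_G is the edge-connectivity of G, L_G is the number of loop indices, and m(G) is the minimum cardinality of a loop cut of G. -/
import Mathlib


/-- `e` is a loop index at vertex `v`. -/
def IsLoopIdx {V : Type*} {m : ℕ} (E : Fin m → Sym2 V) (v : V) (e : Fin m) : Prop :=
  E e = Sym2.diag v

/-- `u` and `v` are connected in the multigraph `E` with the edge indices in `S` deleted. -/
def ConnectedMod {V : Type*} {m : ℕ} (E : Fin m → Sym2 V) (S : Finset (Fin m))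
    (u v : V) : Prop :=
  Relation.EqvGen (fun a b => ∃ e : Fin m, e ∉ S ∧ E e = s(a, b)) u v

/-- `G − S` is decodable: every vertex is connected in `G − S` to a vertex with a loop
outside `S`. -/
def DecodableMod {V : Type*} {m : ℕ} (E : Fin m → Sym2 V) (S : Finset (Fin m)) : Prop :=
  ∀ u : V, ∃ v : V, (∃ e : Fin m, e ∉ S ∧ IsLoopIdx E v e) ∧ ConnectedMod E S u v

def IsDecodable {V : Type*} {m : ℕ} (E : Fin m → Sym2 V) : Prop :=
  DecodableMod E ∅

/-- `c_x^G`: the number of `x`-element sets of edge indices whose deletion leaves a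
decodable graph. -/
noncomputable def cG {V : Type*} {m : ℕ} (E : Fin m → Sym2 V) (x : ℕ) : ℕ :=
  Set.ncard {S : Finset (Fin m) | S.card = x ∧ DecodableMod E S}

/-- `k_x^G = C(m,x) − c_x^G`. -/
noncomputable def kG {V : Type*} {m : ℕ} (E : Fin m → Sym2 V) (x : ℕ) : ℕ :=
  Nat.choose m x - cG E x

/-- `m(G)`: the minimum cardinality of a loop cut. -/
noncomputable def mCut {V : Type*} {m : ℕ} (E : Fin m → Sym2 V) : ℕ :=
  sInf {k : ℕ | ∃ S : Finset (Fin m), S.card = k ∧ ¬ DecodableMod E S}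

/-- incidence degree of `v` (a loop at `v` counts once). -/
noncomputable def dI {V : Type*} {m : ℕ} (E : Fin m → Sym2 V) (v : V) : ℕ :=
  Set.ncard {e : Fin m | v ∈ E e}

/-- `δ_I(G)`: the minimum incidence degree. -/
noncomputable def deltaI {V : Type*} {m : ℕ} (E : Fin m → Sym2 V) : ℕ :=
  sInf (Set.range (dI E))

/-- `L_G`: the number of loop indices. -/
noncomputable def LG {V : Type*} {m : ℕ} (E : Fin m → Sym2 V) : ℕ :=
  Set.ncard {e : Fin m | ∃ v : V, E e = Sym2.diag v}

/-- `δ_ℓ(v)`: the number of loop indices at `v`. -/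
noncomputable def loopsAt {V : Type*} {m : ℕ} (E : Fin m → Sym2 V) (v : V) : ℕ :=
  Set.ncard {e : Fin m | E e = Sym2.diag v}

/-- `Δ_ℓ(G)`: the maximum number of loops at a single vertex. -/
noncomputable def DeltaLoops {V : Type*} {m : ℕ} (E : Fin m → Sym2 V) : ℕ :=
  sSup (Set.range (loopsAt E))

/-- `κ_G`: the edge connectivity. -/
noncomputable def kappaG {V : Type*} {m : ℕ} (E : Fin m → Sym2 V) : ℕ :=
  sInf {k : ℕ | ∃ S : Finset (Fin m), S.card = k ∧ ∃ u v : V, ¬ ConnectedMod E S u v}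

theorem stmt9 {V : Type*} [Fintype V] {m : ℕ} (hV : 2 ≤ Fintype.card V)
    (E : Fin m → Sym2 V) (hdec : IsDecodable E)
    (hconn : ∀ u v : V, ConnectedMod E ∅ u v)
    (hkL : kappaG E ≤ LG E) :
    kappaG E ≤ mCut E := by
  have hVne : Nonempty V := by
    have : 0 < Fintype.card V := by omega
    exact Fintype.card_pos_iff.mp this
  obtain ⟨v0⟩ := hVne
  apply le_csInf
  · refine ⟨m, Finset.univ, by simp, ?_⟩
    intro h
    obtain ⟨v, ⟨e, he, _⟩, _⟩ := h v0
    exact he (Finset.mem_univ e)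
  · rintro k ⟨S, rfl, hS⟩
    by_contra hlt
    push_neg at hlt
    -- all pairs connected mod S
    have hconnS : ∀ u v : V, ConnectedMod E S u v := by
      intro u v
      by_contra hc
      have : kappaG E ≤ S.card := Nat.sInf_le ⟨S, rfl, u, v, hc⟩
      omega
    -- find a loop index outside S
    have hsub : ¬ ({e : Fin m | ∃ v : V, E e = Sym2.diag v} ⊆ ↑S) := by
      intro hsub
      have := Set.ncard_le_ncard hsub S.finite_toSet
      rw [Set.ncard_coe_finset] at this
      have : LG E ≤ S.card := this
      omega
    rw [Set.not_subset] at hsub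
    obtain ⟨e, ⟨v, hv⟩, heS⟩ := hsub
    exact hS fun u => ⟨v, ⟨e, heS, hv⟩, hconnS u v⟩
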